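/- With the notation of the CB-NOMA model, the conditional average minimal transmit power satisfies the lower bound E_t[P_min] ≥ P̃_lo(t); that is, ∫_t^1 ∫_0^∞ ∫_0^∞ P_min(x,y,z)·g(x)·g(y)·b_t(z) dx dy dz ≥ γ1(1+γ2)/((M−1)·β1) + (γ2/((1−t)^(M−1)·β2))·∫_t^1 (1−z)^(M−2)/z dz. -/

import Mathlib

open MeasureTheory Set


lemma intOn_pow_exp (n : ℕ) :
    IntegrableOn (fun x : ℝ => x ^ n * Real.exp (-x)) (Ioi 0) := by
  have h := Real.GammaIntegral_convergent (s := (n : ℝ) + 1) (by positivity)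
  refine h.congr_fun (fun x hx => ?_) measurableSet_Ioi
  rw [add_sub_cancel_right]; beta_reduce; rw [Real.rpow_natCast, mul_comm]

lemma int_pow_exp (n : ℕ) :
    ∫ x in Ioi (0:ℝ), x ^ n * Real.exp (-x) = (Nat.factorial n : ℝ) := by
  have h := Real.Gamma_eq_integral (s := (n : ℝ) + 1) (by positivity)
  rw [Real.Gamma_nat_eq_factorial] at h
  rw [h]
  refine setIntegral_congr_fun measurableSet_Ioi fun x hx => ?_
  rw [add_sub_cancel_right, Real.rpow_natCast, mul_comm]

lemma key_eq {n : ℕ} (hn : 1 ≤ n) (a c : ℝ) {x : ℝ} (hx : x ∈ Ioi (0:ℝ)) :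
    (a / x + c) * (x ^ n * Real.exp (-x) / (Nat.factorial n : ℝ))
      = (a / (Nat.factorial n : ℝ)) * (x ^ (n-1) * Real.exp (-x))
        + (c / (Nat.factorial n : ℝ)) * (x ^ n * Real.exp (-x)) := by
  have hx0 : (0:ℝ) < x := hx
  have hpow : x ^ n = x ^ (n-1) * x := by rw [← pow_succ, Nat.sub_add_cancel hn]
  have hfac : (0:ℝ) < (Nat.factorial n : ℝ) := by positivity
  field_simp
  rw [hpow]; ring

lemma inner_integrable {n : ℕ} (hn : 1 ≤ n) (a c : ℝ) :
    IntegrableOn (fun x : ℝ => (a / x + c) * (x ^ n * Real.exp (-x) / (Nat.factorial n : ℝ)))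
      (Ioi 0) := by
  have h : IntegrableOn (fun x : ℝ =>
      (a / (Nat.factorial n : ℝ)) * (x ^ (n-1) * Real.exp (-x))
        + (c / (Nat.factorial n : ℝ)) * (x ^ n * Real.exp (-x))) (Ioi 0) :=
    (((intOn_pow_exp (n-1)).const_mul _).add ((intOn_pow_exp n).const_mul _))
  exact h.congr_fun (fun x hx => (key_eq hn a c hx).symm) measurableSet_Ioi

lemma inner_int {n : ℕ} (hn : 1 ≤ n) (a c : ℝ) :
    ∫ x in Ioi (0:ℝ), (a / x + c) * (x ^ n * Real.exp (-x) / (Nat.factorial n : ℝ))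
      = a / n + c := by
  rw [setIntegral_congr_fun measurableSet_Ioi (fun x hx => key_eq hn a c hx)]
  rw [integral_add (((intOn_pow_exp (n-1)).const_mul _)) (((intOn_pow_exp n).const_mul _)),
    integral_const_mul, integral_const_mul, int_pow_exp, int_pow_exp]
  have h1 : (Nat.factorial n : ℝ) = n * Nat.factorial (n-1) := by
    rw_mod_cast [Nat.mul_factorial_pred (by omega : n ≠ 0)]
  have h2 : (0:ℝ) < Nat.factorial (n-1) := by positivity
  have h3 : (0:ℝ) < n := by exact_mod_cast hn
  rw [h1]; field_simp


lemma P_bounds {β1 A γ2 c : ℝ} (hβ1 : 0 < β1) (hA : 0 ≤ A) (hγ2 : 0 < γ2) (hc : 0 < c)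
    {x : ℝ} (hx : (0:ℝ) < x) :
    ((A/β1) / x + γ2/c ≤ A/(β1*x) + γ2/min (β1*x) c)
      ∧ (A/(β1*x) + γ2/min (β1*x) c ≤ ((A+γ2)/β1)/x + γ2/c) := by
  have hbx : 0 < β1 * x := by positivity
  have hmin : 0 < min (β1*x) c := lt_min hbx hc
  have h1 : A/(β1*x) = (A/β1)/x := by rw [div_div]
  constructor
  · rw [h1]
    exact add_le_add le_rfl (div_le_div_of_nonneg_left hγ2.le hmin (min_le_right _ _))
  · have h2 : γ2/min (β1*x) c ≤ γ2/(β1*x) + γ2/c := by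
      rcases min_cases (β1*x) c with ⟨h, _⟩ | ⟨h, _⟩
      · rw [h]; nlinarith [div_nonneg hγ2.le hc.le]
      · rw [h]; nlinarith [div_nonneg hγ2.le hbx.le]
    have h3 : A/(β1*x) + γ2/(β1*x) + γ2/c = ((A+γ2)/β1)/x + γ2/c := by
      rw [div_div, ← add_div, add_div]
    linarith [h2, le_refl (A/(β1*x))]

lemma P_meas {β1 γ2 A c : ℝ} (n : ℕ) :
    Measurable (fun x : ℝ => (A/(β1*x) + γ2/min (β1*x) c)
      * (x ^ n * Real.exp (-x) / (Nat.factorial n : ℝ))) := by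
  fun_prop

lemma K_integrable {n : ℕ} (hn : 1 ≤ n) {β1 A γ2 c : ℝ} (hβ1 : 0 < β1) (hA : 0 ≤ A)
    (hγ2 : 0 < γ2) (hc : 0 < c) :
    IntegrableOn (fun x : ℝ => (A/(β1*x) + γ2/min (β1*x) c)
      * (x ^ n * Real.exp (-x) / (Nat.factorial n : ℝ))) (Ioi 0) := by
  refine Integrable.mono' (inner_integrable hn ((A+γ2)/β1) (γ2/c))
    (P_meas n).aestronglyMeasurable ?_
  refine (ae_restrict_iff' measurableSet_Ioi).2 (ae_of_all _ fun x hx => ?_)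
  have hx0 : (0:ℝ) < x := hx
  have hg0 : 0 ≤ x ^ n * Real.exp (-x) / (Nat.factorial n : ℝ) := by positivity
  have hmin : 0 < min (β1*x) c := lt_min (by positivity) hc
  have hP0 : 0 ≤ A/(β1*x) + γ2/min (β1*x) c := by positivity
  rw [Real.norm_eq_abs, abs_of_nonneg (mul_nonneg hP0 hg0)]
  exact mul_le_mul_of_nonneg_right ((P_bounds hβ1 hA hγ2 hc hx0).2) hg0

lemma K_bounds {n : ℕ} (hn : 1 ≤ n) {β1 A γ2 c : ℝ} (hβ1 : 0 < β1) (hA : 0 ≤ A)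
    (hγ2 : 0 < γ2) (hc : 0 < c) :
    ((A/β1) / n + γ2/c ≤ ∫ x in Ioi (0:ℝ), (A/(β1*x) + γ2/min (β1*x) c)
        * (x ^ n * Real.exp (-x) / (Nat.factorial n : ℝ)))
    ∧ (∫ x in Ioi (0:ℝ), (A/(β1*x) + γ2/min (β1*x) c)
        * (x ^ n * Real.exp (-x) / (Nat.factorial n : ℝ)) ≤ ((A+γ2)/β1)/n + γ2/c) := by
  constructor
  · rw [← inner_int hn (A/β1) (γ2/c)]
    refine setIntegral_mono_on (inner_integrable hn _ _) (K_integrable hn hβ1 hA hγ2 hc)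
      measurableSet_Ioi fun x hx => ?_
    have hg0 : 0 ≤ x ^ n * Real.exp (-x) / (Nat.factorial n : ℝ) := by
      have hx0 : (0:ℝ) < x := hx; positivity
    exact mul_le_mul_of_nonneg_right ((P_bounds hβ1 hA hγ2 hc hx).1) hg0
  · rw [← inner_int hn ((A+γ2)/β1) (γ2/c)]
    refine setIntegral_mono_on (K_integrable hn hβ1 hA hγ2 hc) (inner_integrable hn _ _)
      measurableSet_Ioi fun x hx => ?_
    have hg0 : 0 ≤ x ^ n * Real.exp (-x) / (Nat.factorial n : ℝ) := by
      have hx0 : (0:ℝ) < x := hx; positivity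
    exact mul_le_mul_of_nonneg_right ((P_bounds hβ1 hA hγ2 hc hx).2) hg0

lemma D_bounds {n : ℕ} (hn : 1 ≤ n) {β1 β2 A γ2 B z : ℝ} (hβ1 : 0 < β1) (hβ2 : 0 < β2)
    (hA : 0 ≤ A) (hγ2 : 0 < γ2) (hz : 0 < z) (hB : 0 ≤ B) :
    ((γ2/(β2*z))/n + (A/β1)/n) * B
      ≤ (∫ y in Ioi (0:ℝ), ∫ x in Ioi (0:ℝ), (A/(β1*x) + γ2/min (β1*x) (β2*y*z))
          * (x ^ n * Real.exp (-x) / (Nat.factorial n : ℝ))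
          * (y ^ n * Real.exp (-y) / (Nat.factorial n : ℝ)) * B)
    ∧ (∫ y in Ioi (0:ℝ), ∫ x in Ioi (0:ℝ), (A/(β1*x) + γ2/min (β1*x) (β2*y*z))
          * (x ^ n * Real.exp (-x) / (Nat.factorial n : ℝ))
          * (y ^ n * Real.exp (-y) / (Nat.factorial n : ℝ)) * B)
      ≤ ((γ2/(β2*z))/n + ((A+γ2)/β1)/n) * B := by
  have hinner : ∀ y : ℝ, (∫ x in Ioi (0:ℝ), (A/(β1*x) + γ2/min (β1*x) (β2*y*z))
          * (x ^ n * Real.exp (-x) / (Nat.factorial n : ℝ))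
          * (y ^ n * Real.exp (-y) / (Nat.factorial n : ℝ)) * B)
      = (∫ x in Ioi (0:ℝ), (A/(β1*x) + γ2/min (β1*x) (β2*y*z))
          * (x ^ n * Real.exp (-x) / (Nat.factorial n : ℝ)))
        * (y ^ n * Real.exp (-y) / (Nat.factorial n : ℝ)) * B := by
    intro y
    rw [integral_mul_const, integral_mul_const]
  have heq : ∀ y : ℝ, γ2/(β2*y*z) = (γ2/(β2*z))/y := by
    intro y; rw [mul_right_comm, div_div]
  -- measurability of K
  have hKsm : StronglyMeasurable (fun y : ℝ => ∫ x in Ioi (0:ℝ),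
      (A/(β1*x) + γ2/min (β1*x) (β2*y*z))
        * (x ^ n * Real.exp (-x) / (Nat.factorial n : ℝ))) := by
    have hmeas : Measurable (fun p : ℝ × ℝ => (A/(β1*p.2) + γ2/min (β1*p.2) (β2*p.1*z))
        * (p.2 ^ n * Real.exp (-p.2) / (Nat.factorial n : ℝ))) := by fun_prop
    exact hmeas.stronglyMeasurable.integral_prod_right'
  have hsm : StronglyMeasurable (fun y : ℝ => (∫ x in Ioi (0:ℝ),
      (A/(β1*x) + γ2/min (β1*x) (β2*y*z))
        * (x ^ n * Real.exp (-x) / (Nat.factorial n : ℝ)))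
        * (y ^ n * Real.exp (-y) / (Nat.factorial n : ℝ)) * B) := by
    exact (hKsm.mul (by fun_prop : Measurable (fun y : ℝ =>
      y ^ n * Real.exp (-y) / (Nat.factorial n : ℝ))).stronglyMeasurable).mul_const B
  -- lower / upper comparison functions in y
  have hlo_int : IntegrableOn (fun y : ℝ =>
      ((γ2/(β2*z))/y + (A/β1)/n) * (y ^ n * Real.exp (-y) / (Nat.factorial n : ℝ)) * B)
      (Ioi 0) := (inner_integrable hn _ _).mul_const B
  have hup_int : IntegrableOn (fun y : ℝ =>
      ((γ2/(β2*z))/y + ((A+γ2)/β1)/n) * (y ^ n * Real.exp (-y) / (Nat.factorial n : ℝ)) * B)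
      (Ioi 0) := (inner_integrable hn _ _).mul_const B
  have hKlo : ∀ y ∈ Ioi (0:ℝ),
      ((γ2/(β2*z))/y + (A/β1)/n) * (y ^ n * Real.exp (-y) / (Nat.factorial n : ℝ)) * B
        ≤ (∫ x in Ioi (0:ℝ), (A/(β1*x) + γ2/min (β1*x) (β2*y*z))
            * (x ^ n * Real.exp (-x) / (Nat.factorial n : ℝ)))
          * (y ^ n * Real.exp (-y) / (Nat.factorial n : ℝ)) * B := by
    intro y hy
    have hy0 : (0:ℝ) < y := hy
    have hc : 0 < β2*y*z := by positivity
    have hgB : 0 ≤ (y ^ n * Real.exp (-y) / (Nat.factorial n : ℝ)) * B := by positivity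
    have h := (K_bounds hn hβ1 hA hγ2 hc).1
    rw [heq y] at h
    calc ((γ2/(β2*z))/y + (A/β1)/n) * (y ^ n * Real.exp (-y) / (Nat.factorial n : ℝ)) * B
        = ((A/β1)/n + (γ2/(β2*z))/y) * ((y ^ n * Real.exp (-y) / (Nat.factorial n : ℝ)) * B) := by
          ring
      _ ≤ (∫ x in Ioi (0:ℝ), (A/(β1*x) + γ2/min (β1*x) (β2*y*z))
            * (x ^ n * Real.exp (-x) / (Nat.factorial n : ℝ)))
          * ((y ^ n * Real.exp (-y) / (Nat.factorial n : ℝ)) * B) :=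
          mul_le_mul_of_nonneg_right h hgB
      _ = _ := by ring
  have hKup : ∀ y ∈ Ioi (0:ℝ),
      (∫ x in Ioi (0:ℝ), (A/(β1*x) + γ2/min (β1*x) (β2*y*z))
            * (x ^ n * Real.exp (-x) / (Nat.factorial n : ℝ)))
          * (y ^ n * Real.exp (-y) / (Nat.factorial n : ℝ)) * B
        ≤ ((γ2/(β2*z))/y + ((A+γ2)/β1)/n)
            * (y ^ n * Real.exp (-y) / (Nat.factorial n : ℝ)) * B := by
    intro y hy
    have hy0 : (0:ℝ) < y := hy
    have hc : 0 < β2*y*z := by positivity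
    have hgB : 0 ≤ (y ^ n * Real.exp (-y) / (Nat.factorial n : ℝ)) * B := by positivity
    have h := (K_bounds hn hβ1 hA hγ2 hc).2
    rw [heq y] at h
    calc (∫ x in Ioi (0:ℝ), (A/(β1*x) + γ2/min (β1*x) (β2*y*z))
            * (x ^ n * Real.exp (-x) / (Nat.factorial n : ℝ)))
          * (y ^ n * Real.exp (-y) / (Nat.factorial n : ℝ)) * B
        = (∫ x in Ioi (0:ℝ), (A/(β1*x) + γ2/min (β1*x) (β2*y*z))
            * (x ^ n * Real.exp (-x) / (Nat.factorial n : ℝ)))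
          * ((y ^ n * Real.exp (-y) / (Nat.factorial n : ℝ)) * B) := by ring
      _ ≤ (((A+γ2)/β1)/n + (γ2/(β2*z))/y)
          * ((y ^ n * Real.exp (-y) / (Nat.factorial n : ℝ)) * B) :=
          mul_le_mul_of_nonneg_right h hgB
      _ = _ := by ring
  -- integrability of the middle function
  have hKnonneg : ∀ y ∈ Ioi (0:ℝ), 0 ≤ (∫ x in Ioi (0:ℝ),
      (A/(β1*x) + γ2/min (β1*x) (β2*y*z))
        * (x ^ n * Real.exp (-x) / (Nat.factorial n : ℝ)))
        * (y ^ n * Real.exp (-y) / (Nat.factorial n : ℝ)) * B := by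
    intro y hy
    have hy0 : (0:ℝ) < y := hy
    refine mul_nonneg (mul_nonneg (setIntegral_nonneg measurableSet_Ioi fun x hx => ?_)
      (by positivity)) hB
    have hx0 : (0:ℝ) < x := hx
    have hmin : 0 < min (β1*x) (β2*y*z) := lt_min (by positivity) (by positivity)
    positivity
  have hmid_int : IntegrableOn (fun y : ℝ => (∫ x in Ioi (0:ℝ),
      (A/(β1*x) + γ2/min (β1*x) (β2*y*z))
        * (x ^ n * Real.exp (-x) / (Nat.factorial n : ℝ)))
        * (y ^ n * Real.exp (-y) / (Nat.factorial n : ℝ)) * B) (Ioi 0) := by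
    refine Integrable.mono' hup_int hsm.aestronglyMeasurable ?_
    refine (ae_restrict_iff' measurableSet_Ioi).2 (ae_of_all _ fun y hy => ?_)
    rw [Real.norm_eq_abs, abs_of_nonneg (hKnonneg y hy)]
    exact hKup y hy
  constructor
  · simp only [hinner]
    rw [← show (∫ y in Ioi (0:ℝ),
        ((γ2/(β2*z))/y + (A/β1)/n) * (y ^ n * Real.exp (-y) / (Nat.factorial n : ℝ)) * B)
        = ((γ2/(β2*z))/n + (A/β1)/n) * B from by
      rw [integral_mul_const, inner_int hn]]
    exact setIntegral_mono_on hlo_int hmid_int measurableSet_Ioi hKlo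
  · simp only [hinner]
    rw [← show (∫ y in Ioi (0:ℝ),
        ((γ2/(β2*z))/y + ((A+γ2)/β1)/n) * (y ^ n * Real.exp (-y) / (Nat.factorial n : ℝ)) * B)
        = ((γ2/(β2*z))/n + ((A+γ2)/β1)/n) * B from by
      rw [integral_mul_const, inner_int hn]]
    exact setIntegral_mono_on hmid_int hup_int measurableSet_Ioi hKup


/-- CB-NOMA lower bound on the conditional average minimal transmit power:
`E_t[P_min] ≥ P̃_lo(t)`. -/
theorem cbnoma_avg_power_lower_bound (M : ℕ) (hM : 2 ≤ M)
    (β1 β2 γ1 γ2 t : ℝ) (hβ : β2 ≤ β1) (hβ2 : 0 < β2)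
    (hγ1 : 0 < γ1) (hγ2 : 0 < γ2) (ht0 : 0 < t) (ht1 : t < 1) :
    γ1 * (1 + γ2) / (((M : ℝ) - 1) * β1)
        + (γ2 / ((1 - t) ^ (M - 1) * β2)) * (∫ z in t..1, (1 - z) ^ (M - 2) / z)
      ≤ ∫ z in t..1, ∫ y in Ioi (0 : ℝ), ∫ x in Ioi (0 : ℝ),
          (γ1 * (1 + γ2) / (β1 * x) + γ2 / min (β1 * x) (β2 * y * z))
            * (x ^ (M - 1) * Real.exp (-x) / (Nat.factorial (M - 1) : ℝ))
            * (y ^ (M - 1) * Real.exp (-y) / (Nat.factorial (M - 1) : ℝ))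
            * (((M : ℝ) - 1) * (1 - z) ^ (M - 2) / (1 - t) ^ (M - 1)) := by
  have hβ1 : 0 < β1 := lt_of_lt_of_le hβ2 hβ
  have hn : 1 ≤ M - 1 := by omega
  have hA : (0:ℝ) ≤ γ1 * (1 + γ2) := by positivity
  have hN : ((M - 1 : ℕ) : ℝ) = (M:ℝ) - 1 := by
    have := Nat.cast_sub (R := ℝ) (by omega : 1 ≤ M); simpa using this
  have hNpos : (0:ℝ) < (M:ℝ) - 1 := by
    rw [← hN]; exact_mod_cast hn
  have h1t : (0:ℝ) < 1 - t := by linarith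
  -- bounds on the double integral, for z ∈ [t,1]
  have stepB : ∀ z ∈ Icc t 1,
      ((γ2/(β2*z))/((M:ℝ)-1) + (γ1 * (1 + γ2)/β1)/((M:ℝ)-1))
          * (((M:ℝ)-1) * (1 - z) ^ (M - 2) / (1 - t) ^ (M - 1))
        ≤ (∫ y in Ioi (0:ℝ), ∫ x in Ioi (0:ℝ),
            (γ1 * (1 + γ2) / (β1 * x) + γ2 / min (β1 * x) (β2 * y * z))
              * (x ^ (M - 1) * Real.exp (-x) / (Nat.factorial (M - 1) : ℝ))
              * (y ^ (M - 1) * Real.exp (-y) / (Nat.factorial (M - 1) : ℝ))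
              * (((M : ℝ) - 1) * (1 - z) ^ (M - 2) / (1 - t) ^ (M - 1)))
      ∧ (∫ y in Ioi (0:ℝ), ∫ x in Ioi (0:ℝ),
            (γ1 * (1 + γ2) / (β1 * x) + γ2 / min (β1 * x) (β2 * y * z))
              * (x ^ (M - 1) * Real.exp (-x) / (Nat.factorial (M - 1) : ℝ))
              * (y ^ (M - 1) * Real.exp (-y) / (Nat.factorial (M - 1) : ℝ))
              * (((M : ℝ) - 1) * (1 - z) ^ (M - 2) / (1 - t) ^ (M - 1)))
        ≤ ((γ2/(β2*z))/((M:ℝ)-1) + ((γ1 * (1 + γ2)+γ2)/β1)/((M:ℝ)-1))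
            * (((M:ℝ)-1) * (1 - z) ^ (M - 2) / (1 - t) ^ (M - 1)) := by
    intro z hz
    have hz0 : 0 < z := lt_of_lt_of_le ht0 hz.1
    have hz1 : (0:ℝ) ≤ 1 - z := by linarith [hz.2]
    have hB : (0:ℝ) ≤ ((M:ℝ)-1) * (1 - z) ^ (M - 2) / (1 - t) ^ (M - 1) := by positivity
    have h := D_bounds hn (β1 := β1) (β2 := β2) (A := γ1 * (1 + γ2)) (γ2 := γ2)
      (B := ((M:ℝ)-1) * (1 - z) ^ (M - 2) / (1 - t) ^ (M - 1)) (z := z)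
      hβ1 hβ2 hA hγ2 hz0 hB
    rw [hN] at h
    exact h
  -- measurability of the double integral in z
  have hF : Measurable (fun p : (ℝ × ℝ) × ℝ =>
      (γ1 * (1 + γ2) / (β1 * p.2) + γ2 / min (β1 * p.2) (β2 * p.1.2 * p.1.1))
        * (p.2 ^ (M - 1) * Real.exp (-p.2) / (Nat.factorial (M - 1) : ℝ))
        * (p.1.2 ^ (M - 1) * Real.exp (-p.1.2) / (Nat.factorial (M - 1) : ℝ))
        * (((M : ℝ) - 1) * (1 - p.1.1) ^ (M - 2) / (1 - t) ^ (M - 1))) := by fun_prop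
  have h1 : StronglyMeasurable (fun q : ℝ × ℝ => ∫ x in Ioi (0:ℝ),
      (γ1 * (1 + γ2) / (β1 * x) + γ2 / min (β1 * x) (β2 * q.2 * q.1))
        * (x ^ (M - 1) * Real.exp (-x) / (Nat.factorial (M - 1) : ℝ))
        * (q.2 ^ (M - 1) * Real.exp (-q.2) / (Nat.factorial (M - 1) : ℝ))
        * (((M : ℝ) - 1) * (1 - q.1) ^ (M - 2) / (1 - t) ^ (M - 1))) :=
    hF.stronglyMeasurable.integral_prod_right'
  have hDsm : StronglyMeasurable (fun z : ℝ => ∫ y in Ioi (0:ℝ), ∫ x in Ioi (0:ℝ),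
      (γ1 * (1 + γ2) / (β1 * x) + γ2 / min (β1 * x) (β2 * y * z))
        * (x ^ (M - 1) * Real.exp (-x) / (Nat.factorial (M - 1) : ℝ))
        * (y ^ (M - 1) * Real.exp (-y) / (Nat.factorial (M - 1) : ℝ))
        * (((M : ℝ) - 1) * (1 - z) ^ (M - 2) / (1 - t) ^ (M - 1))) :=
    h1.integral_prod_right'
  have huIcc : uIcc t 1 = Icc t 1 := uIcc_of_le ht1.le
  have hzpos : ∀ z ∈ uIcc t 1, 0 < z := by
    intro z hz; rw [huIcc] at hz; exact lt_of_lt_of_le ht0 hz.1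
  have hzne : ∀ z ∈ uIcc t 1, β2 * z ≠ 0 := fun z hz => by
    have := hzpos z hz; positivity
  have hzne' : ∀ z ∈ uIcc t 1, z ≠ 0 := fun z hz => (hzpos z hz).ne'
  -- interval integrability of the upper and lower comparison functions
  have hupc : ContinuousOn (fun z : ℝ =>
      ((γ2/(β2*z))/((M:ℝ)-1) + ((γ1 * (1 + γ2)+γ2)/β1)/((M:ℝ)-1))
        * (((M:ℝ)-1) * (1 - z) ^ (M - 2) / (1 - t) ^ (M - 1))) (uIcc t 1) := by
    refine ContinuousOn.mul (ContinuousOn.add (ContinuousOn.div_const ?_ _) continuousOn_const)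
      (Continuous.continuousOn (by fun_prop))
    exact continuousOn_const.div (continuous_const.mul continuous_id).continuousOn hzne
  have hloc : ContinuousOn (fun z : ℝ =>
      ((γ2/(β2*z))/((M:ℝ)-1) + (γ1 * (1 + γ2)/β1)/((M:ℝ)-1))
        * (((M:ℝ)-1) * (1 - z) ^ (M - 2) / (1 - t) ^ (M - 1))) (uIcc t 1) := by
    refine ContinuousOn.mul (ContinuousOn.add (ContinuousOn.div_const ?_ _) continuousOn_const)
      (Continuous.continuousOn (by fun_prop))
    exact continuousOn_const.div (continuous_const.mul continuous_id).continuousOn hzne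
  have hup_ii := hupc.intervalIntegrable (μ := volume)
  have hlo_ii := hloc.intervalIntegrable (μ := volume)
  have hD_ii : IntervalIntegrable (fun z : ℝ => ∫ y in Ioi (0:ℝ), ∫ x in Ioi (0:ℝ),
      (γ1 * (1 + γ2) / (β1 * x) + γ2 / min (β1 * x) (β2 * y * z))
        * (x ^ (M - 1) * Real.exp (-x) / (Nat.factorial (M - 1) : ℝ))
        * (y ^ (M - 1) * Real.exp (-y) / (Nat.factorial (M - 1) : ℝ))
        * (((M : ℝ) - 1) * (1 - z) ^ (M - 2) / (1 - t) ^ (M - 1))) volume t 1 := by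
    refine IntervalIntegrable.mono_fun' hup_ii hDsm.aestronglyMeasurable.restrict ?_
    rw [uIoc_of_le ht1.le]
    refine (ae_restrict_iff' measurableSet_Ioc).2 (ae_of_all _ fun z hz => ?_)
    have hzIcc : z ∈ Icc t 1 := ⟨hz.1.le, hz.2⟩
    have hz0 : 0 < z := lt_of_lt_of_le ht0 hzIcc.1
    have h1z : (0:ℝ) ≤ 1 - z := by linarith [hzIcc.2]
    have h := stepB z hzIcc
    have hlo0 : 0 ≤ ((γ2/(β2*z))/((M:ℝ)-1) + (γ1 * (1 + γ2)/β1)/((M:ℝ)-1))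
        * (((M:ℝ)-1) * (1 - z) ^ (M - 2) / (1 - t) ^ (M - 1)) := by positivity
    dsimp only
    rw [Real.norm_eq_abs, abs_of_nonneg (le_trans hlo0 h.1)]
    exact h.2
  have hmono := intervalIntegral.integral_mono_on ht1.le hlo_ii hD_ii
    (fun z hz => (stepB z hz).1)
  refine le_trans (le_of_eq ?_) hmono
  -- compute the integral of the lower bound
  have hloeq : EqOn (fun z : ℝ =>
      ((γ2/(β2*z))/((M:ℝ)-1) + (γ1 * (1 + γ2)/β1)/((M:ℝ)-1))
        * (((M:ℝ)-1) * (1 - z) ^ (M - 2) / (1 - t) ^ (M - 1)))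
      (fun z : ℝ => (γ1 * (1 + γ2)/β1/(1-t)^(M-1)) * (1 - z) ^ (M - 2)
        + (γ2/β2/(1-t)^(M-1)) * ((1 - z) ^ (M - 2) / z)) (uIcc t 1) := by
    intro z hz
    have hz0 : 0 < z := hzpos z hz
    have h1tne : ((1:ℝ)-t)^(M-1) ≠ 0 := by positivity
    field_simp
    ring
  have hc1_ii : IntervalIntegrable
      (fun z : ℝ => (γ1 * (1 + γ2)/β1/(1-t)^(M-1)) * (1 - z) ^ (M - 2)) volume t 1 :=
    Continuous.intervalIntegrable (by fun_prop) t 1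
  have hc2_ii : IntervalIntegrable
      (fun z : ℝ => (γ2/β2/(1-t)^(M-1)) * ((1 - z) ^ (M - 2) / z)) volume t 1 := by
    refine ContinuousOn.intervalIntegrable ?_
    exact continuousOn_const.mul
      (((continuous_const.sub continuous_id).pow _).continuousOn.div continuousOn_id hzne')
  have hpow : (∫ z in t..1, (1-z)^(M-2)) = (1-t)^(M-1)/((M:ℝ)-1) := by
    have h := intervalIntegral.integral_comp_sub_left (a := t) (b := 1)
      (fun u : ℝ => u ^ (M-2)) 1
    norm_num at h
    have hc : ((M - 2 : ℕ) : ℝ) = (M:ℝ) - 2 := by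
      have := Nat.cast_sub (R := ℝ) (by omega : 2 ≤ M); simpa using this
    rw [h, show M - 2 + 1 = M - 1 from by omega, hc]
    ring_nf
  rw [intervalIntegral.integral_congr hloeq,
    intervalIntegral.integral_add hc1_ii hc2_ii,
    intervalIntegral.integral_const_mul, intervalIntegral.integral_const_mul, hpow]
  have h1tne : ((1:ℝ)-t)^(M-1) ≠ 0 := by positivity
  field_simp
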